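/- Let K ⊆ ℝ³ be the convex hull of the seven points a = (0,0,0), b = (1,0,0), c = (0,0,−1), d = (1,0,−1), e = (1/2,1/2,1/2), f = (0,1,0), g = (1,1,0), and let F be the convex hull of {a, b, c, d} (the facet of K in the plane y = 0). Then there is a constant c₀ > 0 such that for every positive integer m there exist translation vectors t₁, …, t₍₂ₘ₎ ∈ ℝ³ for which, setting U = K ∪ ⋃_{i=1}^{2m} (tᵢ + K), at least c₀·m² connected components of ℝ³ ∖ U have closure intersecting F. -/

import Mathlib

open Pointwise

/-- The polytope `K` of the warm-up construction: the convex hull of seven points. -/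
noncomputable def Kwarm : Set (Fin 3 → ℝ) :=
  convexHull ℝ
    ({![0, 0, 0], ![1, 0, 0], ![0, 0, -1], ![1, 0, -1],
      ![1/2, 1/2, 1/2], ![0, 1, 0], ![1, 1, 0]} : Set (Fin 3 → ℝ))

/-- The facet `F` of `Kwarm` in the plane `y = 0`. -/
noncomputable def Fwarm : Set (Fin 3 → ℝ) :=
  convexHull ℝ ({![0, 0, 0], ![1, 0, 0], ![0, 0, -1], ![1, 0, -1]} : Set (Fin 3 → ℝ))

namespace MH

abbrev V3 := Fin 3 → ℝ

/-- H-description superset of K -/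
def HK : Set V3 := {p | 0 ≤ p 1 ∧ p 2 ≤ p 1 ∧ p 1 + p 2 ≤ 1 ∧ p 1 - 1 ≤ p 2 ∧
    0 ≤ p 0 ∧ p 0 ≤ 1 ∧ p 2 ≤ p 0 ∧ p 2 ≤ 1 - p 0}

lemma convex_HK : Convex ℝ HK := by
  intro a ha b hb s t hs ht hst
  simp only [HK, Set.mem_setOf_eq] at ha hb ⊢
  obtain ⟨a1, a2, a3, a4, a5, a6, a7, a8⟩ := ha
  obtain ⟨b1, b2, b3, b4, b5, b6, b7, b8⟩ := hb
  refine ⟨?_, ?_, ?_, ?_, ?_, ?_, ?_, ?_⟩ <;>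
    simp only [Pi.add_apply, Pi.smul_apply, smul_eq_mul] <;> nlinarith

lemma K_sub_HK : Kwarm ⊆ HK := by
  apply convexHull_min _ convex_HK
  intro p hp
  simp only [Set.mem_insert_iff, Set.mem_singleton_iff] at hp
  rcases hp with rfl | rfl | rfl | rfl | rfl | rfl | rfl <;>
    · simp only [HK, Set.mem_setOf_eq] ; norm_num [Matrix.cons_val_two, Matrix.vecHead, Matrix.vecTail]

lemma memK_bounds {q : V3} (h : q ∈ Kwarm) :
    0 ≤ q 1 ∧ q 2 ≤ q 1 ∧ q 1 + q 2 ≤ 1 ∧ q 1 - 1 ≤ q 2 ∧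
    0 ≤ q 0 ∧ q 0 ≤ 1 ∧ q 2 ≤ q 0 ∧ q 2 ≤ 1 - q 0 := K_sub_HK h

end MH

namespace MH

@[simp] lemma vec6_five {α : Type*} (a b c d e f : α) : ![a,b,c,d,e,f] 5 = f := rfl

@[simp] lemma vec7_five {α : Type*} (a b c d e f g : α) : ![a,b,c,d,e,f,g] 5 = f := rfl
@[simp] lemma vec7_six {α : Type*} (a b c d e f g : α) : ![a,b,c,d,e,f,g] 6 = g := rfl

/-- generic membership-by-convex-combination in `Kwarm` -/
lemma combo_mem_K {p : V3} (w : Fin 7 → ℝ) (hw : ∀ i, 0 ≤ w i) (hsum : ∑ i, w i = 1)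
    (hx : w 1 + w 3 + w 4 / 2 + w 6 = p 0)
    (hy : w 4 / 2 + w 5 + w 6 = p 1)
    (hz : -(w 2) - w 3 + w 4 / 2 = p 2) : p ∈ Kwarm := by
  classical
  let Pts : Fin 7 → V3 := ![![0,0,0], ![1,0,0], ![0,0,-1], ![1,0,-1], ![1/2,1/2,1/2], ![0,1,0], ![1,1,0]]
  have hmem := Finset.centerMass_mem_convexHull (Finset.univ : Finset (Fin 7))
    (fun i _ => hw i) (by rw [hsum]; norm_num)
    (z := Pts) (s := ({![0, 0, 0], ![1, 0, 0], ![0, 0, -1], ![1, 0, -1],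
      ![1/2, 1/2, 1/2], ![0, 1, 0], ![1, 1, 0]} : Set V3)) (by intro i _; fin_cases i <;> simp [Pts])
  have heq : (Finset.univ : Finset (Fin 7)).centerMass w Pts = p := by
    rw [Finset.centerMass, hsum]
    funext i
    fin_cases i <;>
      · simp [Fin.sum_univ_seven, Pts, Pi.smul_apply, smul_eq_mul]
        linarith
  rw [heq] at hmem
  exact hmem

lemma wedge_mem {p : V3} (h0 : 0 ≤ p 0) (h1 : p 0 ≤ 1) (h2 : 0 ≤ p 1) (h3 : p 1 ≤ 1)
    (h4 : p 1 - 1 ≤ p 2) (h5 : p 2 ≤ 0) : p ∈ Kwarm := by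
  set x := p 0; set y := p 1; set z := p 2
  refine combo_mem_K ![(1-x)*(1+z-y), x*(1+z-y), (1-x)*(-z), x*(-z), 0, (1-x)*y, x*y]
    (fun i => by fin_cases i <;> simp <;> nlinarith) ?_ ?_ ?_ ?_ <;>
    simp [Fin.sum_univ_seven] <;> ring

lemma pyr_mem {p : V3} (h0 : p 2 ≤ p 0) (h1 : p 2 ≤ 1 - p 0) (h2 : p 2 ≤ p 1) (h3 : p 2 ≤ 1 - p 1)
    (h4 : 0 ≤ p 2) : p ∈ Kwarm := by
  set x := p 0; set y := p 1; set z := p 2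
  rcases le_or_gt (x + y) 1 with hc | hc
  · refine combo_mem_K ![1-x-y, x-z, 0, 0, 2*z, y-z, 0]
      (fun i => by fin_cases i <;> simp <;> linarith) ?_ ?_ ?_ ?_ <;>
      simp [Fin.sum_univ_seven] <;> ring
  · refine combo_mem_K ![0, 1-y-z, 0, 0, 2*z, 1-x-z, x+y-1]
      (fun i => by fin_cases i <;> simp <;> linarith) ?_ ?_ ?_ ?_ <;>
      simp [Fin.sum_univ_seven] <;> ring

/-- membership in the facet -/
lemma F_mem {p : V3} (h0 : 0 ≤ p 0) (h1 : p 0 ≤ 1) (h2 : p 1 = 0) (h3 : -1 ≤ p 2)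
    (h4 : p 2 ≤ 0) : p ∈ Fwarm := by
  classical
  set x := p 0; set z := p 2
  have hmem := Finset.centerMass_mem_convexHull (Finset.univ : Finset (Fin 4))
    (w := ![(1-x)*(1+z), x*(1+z), (1-x)*(-z), x*(-z)])
    (fun i _ => by fin_cases i <;> simp <;> nlinarith)
    (by simp [Fin.sum_univ_four]; nlinarith)
    (z := ![![0,0,0], ![1,0,0], ![0,0,-1], ![1,0,-1]])
    (s := ({![0, 0, 0], ![1, 0, 0], ![0, 0, -1], ![1, 0, -1]} : Set V3))
    (by intro i _; fin_cases i <;> simp)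
  have heq : (Finset.univ : Finset (Fin 4)).centerMass
      ![(1-x)*(1+z), x*(1+z), (1-x)*(-z), x*(-z)]
      ![![0,0,0], ![1,0,0], ![0,0,-1], ![1,0,-1]] = p := by
    have hsum : ∑ i, (![(1-x)*(1+z), x*(1+z), (1-x)*(-z), x*(-z)] : Fin 4 → ℝ) i = 1 := by
      simp [Fin.sum_univ_four]; ring
    rw [Finset.centerMass, hsum]
    funext i
    fin_cases i <;>
      · simp [Fin.sum_univ_four, Pi.smul_apply, smul_eq_mul]
        linarith [h2]
  rw [heq] at hmem
  exact hmem

/-- the facet is contained in corresponding box -/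
lemma F_bounds {p : V3} (h : p ∈ Fwarm) :
    0 ≤ p 0 ∧ p 0 ≤ 1 ∧ p 1 = 0 ∧ -1 ≤ p 2 ∧ p 2 ≤ 0 := by
  have hsub : Fwarm ⊆ {q : V3 | 0 ≤ q 0 ∧ q 0 ≤ 1 ∧ q 1 = 0 ∧ -1 ≤ q 2 ∧ q 2 ≤ 0} := by
    apply convexHull_min
    · intro q hq
      simp only [Set.mem_insert_iff, Set.mem_singleton_iff] at hq
      rcases hq with rfl | rfl | rfl | rfl <;> · simp only [Set.mem_setOf_eq]; norm_num [Matrix.cons_val_two, Matrix.vecHead, Matrix.vecTail]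
    · intro a ha b hb s t hs ht hst
      simp only [Set.mem_setOf_eq, Pi.add_apply, Pi.smul_apply, smul_eq_mul] at *
      refine ⟨by nlinarith, by nlinarith, by nlinarith, by nlinarith, by nlinarith⟩
  exact hsub h

lemma F_sub_K : Fwarm ⊆ Kwarm := by
  intro p hp
  obtain ⟨h0, h1, h2, h3, h4⟩ := F_bounds hp
  exact wedge_mem h0 h1 (le_of_eq h2.symm) (by linarith) (by linarith) h4

/-! ### parameters and the configuration -/

noncomputable def gp (m : ℕ) : ℝ := 1 / (8 * (m:ℝ)^2)
noncomputable def dl (m : ℕ) : ℝ := (2*(m:ℝ) - 1) * gp m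
noncomputable def czv : ℝ := -11/20
noncomputable def zf (m i : ℕ) : ℝ := czv + 1/2 - gp m / 2 - i * gp m
noncomputable def xs (m j : ℕ) : ℝ := 1/8 + j * dl m
noncomputable def tA (m i : ℕ) : V3 := ![0, -1, zf m i]
noncomputable def tC (m j : ℕ) : V3 := ![xs m j, -1/2, czv]
noncomputable def tt (m : ℕ) : Fin (2*m) → V3 :=
  fun i => if (i : ℕ) < m then tA m i else tC m ((i:ℕ) - m)
noncomputable def UU (m : ℕ) : Set V3 := Kwarm ∪ ⋃ i : Fin (2*m), tt m i +ᵥ Kwarm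

section Params

variable {m : ℕ}

lemma gp_pos (hm : 1 ≤ m) : 0 < gp m := by
  have : (0:ℝ) < (m:ℝ) := by exact_mod_cast hm
  unfold gp; positivity

lemma gp_le (hm : 1 ≤ m) : gp m ≤ 1/8 := by
  have h1 : (1:ℝ) ≤ (m:ℝ) := by exact_mod_cast hm
  unfold gp
  rw [div_le_iff₀ (by nlinarith)]
  nlinarith

lemma mgp_le (hm : 1 ≤ m) : (m:ℝ) * gp m ≤ 1/8 := by
  have h1 : (1:ℝ) ≤ (m:ℝ) := by exact_mod_cast hm
  have h2 : (0:ℝ) < 8 * (m:ℝ)^2 := by nlinarith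
  unfold gp
  rw [mul_one_div, div_le_div_iff₀ h2 (by norm_num)]
  nlinarith [sq_nonneg ((m:ℝ) - 1)]

lemma dl_eq : dl m = 2*(m:ℝ)*gp m - gp m := by unfold dl; ring

lemma dl_pos (hm : 1 ≤ m) : 0 < dl m := by
  have h1 : (1:ℝ) ≤ (m:ℝ) := by exact_mod_cast hm
  have := gp_pos hm
  rw [dl_eq]; nlinarith

lemma zf_succ (i : ℕ) : zf m (i+1) = zf m i - gp m := by
  unfold zf; push_cast; ring

lemma zf_anti (hm : 1 ≤ m) {i j : ℕ} (hij : i ≤ j) : zf m j ≤ zf m i := by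
  have := gp_pos hm
  have : (i:ℝ) ≤ (j:ℝ) := by exact_mod_cast hij
  unfold zf
  nlinarith [gp_pos hm]

lemma zf_le (hm : 1 ≤ m) (i : ℕ) : zf m i ≤ czv + 1/2 - gp m / 2 := by
  have := gp_pos hm
  have h0 : (0:ℝ) ≤ (i:ℝ) := by positivity
  unfold zf
  nlinarith

lemma zf_ge (hm : 1 ≤ m) {i : ℕ} (hi : i < m) : czv + 3/8 + gp m / 2 ≤ zf m i := by
  have h1 : (i:ℝ) + 1 ≤ (m:ℝ) := by exact_mod_cast hi
  have h2 := mgp_le hm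
  have h3 := gp_pos hm
  unfold zf
  nlinarith

lemma xs_succ (j : ℕ) : xs m (j+1) = xs m j + dl m := by
  unfold xs; push_cast; ring

lemma xs_mono (hm : 1 ≤ m) {i j : ℕ} (hij : i ≤ j) : xs m i ≤ xs m j := by
  have h1 : (i:ℝ) ≤ (j:ℝ) := by exact_mod_cast hij
  have := dl_pos hm
  unfold xs
  nlinarith

lemma xs_ge (hm : 1 ≤ m) (j : ℕ) : 1/8 ≤ xs m j := by
  have h0 : (0:ℝ) ≤ (j:ℝ) := by positivity
  have := dl_pos hm
  unfold xs
  nlinarith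

lemma xs_le (hm : 1 ≤ m) {j : ℕ} (hj : j < m) : xs m j ≤ 3/8 := by
  have h1 : (j:ℝ) + 1 ≤ (m:ℝ) := by exact_mod_cast hj
  have h2 : (1:ℝ) ≤ (m:ℝ) := by exact_mod_cast hm
  have h3 := gp_pos hm
  have h4 : (m:ℝ)^2 * gp m = 1/8 := by
    unfold gp
    field_simp
  unfold xs
  rw [dl_eq]
  nlinarith [sq_nonneg ((j:ℝ) + 1 - (m:ℝ))]

end Params

section Translates

variable {m : ℕ} {q : V3}

lemma memA_bounds {i : ℕ} (h : q ∈ tA m i +ᵥ Kwarm) :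
    -1 ≤ q 1 ∧ q 1 ≤ 0 ∧ q 2 ≤ zf m i + q 1 + 1 ∧ q 2 ≤ zf m i - q 1 ∧
    q 1 ≤ q 2 - zf m i ∧ 0 ≤ q 0 ∧ q 0 ≤ 1 ∧ q 2 ≤ zf m i + q 0 ∧ q 2 ≤ zf m i + 1 - q 0 := by
  rw [Set.mem_vadd_set_iff_neg_vadd_mem] at h
  have hb := memK_bounds h
  simp only [vadd_eq_add, Pi.add_apply, Pi.neg_apply, tA] at hb
  norm_num [Matrix.cons_val_two, Matrix.vecHead, Matrix.vecTail] at hb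
  obtain ⟨b1, b2, b3, b4, b5, b6, b7, b8⟩ := hb
  refine ⟨by linarith, ?_, by linarith, by linarith, by linarith, by linarith, by linarith, by linarith, by linarith⟩
  · -- q 1 ≤ 0 : from y' ≤ 1 i.e. need; use b3 and b4? y'+z' ≤ 1 and y'-1 ≤ z' give y' ≤ 1
    linarith

lemma memC_bounds {j : ℕ} (h : q ∈ tC m j +ᵥ Kwarm) :
    -(1/2) ≤ q 1 ∧ q 1 ≤ 1/2 ∧ q 2 ≤ czv + q 1 + 1/2 ∧ q 2 ≤ czv + 1/2 - q 1 ∧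
    q 1 - 1/2 ≤ q 2 - czv ∧ xs m j ≤ q 0 ∧ q 0 ≤ xs m j + 1 ∧
    q 2 ≤ czv + q 0 - xs m j ∧ q 2 ≤ czv + 1 - (q 0 - xs m j) := by
  rw [Set.mem_vadd_set_iff_neg_vadd_mem] at h
  have hb := memK_bounds h
  simp only [vadd_eq_add, Pi.add_apply, Pi.neg_apply, tC] at hb
  norm_num [Matrix.cons_val_two, Matrix.vecHead, Matrix.vecTail] at hb
  obtain ⟨b1, b2, b3, b4, b5, b6, b7, b8⟩ := hb
  exact ⟨by linarith, by linarith, by linarith, by linarith, by linarith, by linarith,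
    by linarith, by linarith, by linarith⟩

lemma mem_vadd_of (t k : V3) (hk : k ∈ Kwarm) (hq : q = t + k) : q ∈ t +ᵥ Kwarm := by
  rw [Set.mem_vadd_set_iff_neg_vadd_mem, hq]
  simpa using hk

lemma mem_UU_iff : q ∈ UU m ↔ q ∈ Kwarm ∨ (∃ i < m, q ∈ tA m i +ᵥ Kwarm) ∨
    (∃ j < m, q ∈ tC m j +ᵥ Kwarm) := by
  constructor
  · rintro (h | h)
    · exact Or.inl h
    · obtain ⟨s, hs⟩ := Set.mem_iUnion.1 h
      by_cases hc : (s : ℕ) < m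
      · refine Or.inr (Or.inl ⟨s, hc, ?_⟩)
        rwa [tt, if_pos hc] at hs
      · refine Or.inr (Or.inr ⟨(s:ℕ) - m, ?_, ?_⟩)
        · omega
        · rwa [tt, if_neg hc] at hs
  · rintro (h | ⟨i, hi, h⟩ | ⟨j, hj, h⟩)
    · exact Or.inl h
    · refine Or.inr (Set.mem_iUnion.2 ⟨⟨i, by omega⟩, ?_⟩)
      rw [tt]
      simp only [if_pos hi]
      exact h
    · refine Or.inr (Set.mem_iUnion.2 ⟨⟨m + j, by omega⟩, ?_⟩)
      rw [tt]
      have : ¬ (m + j < m) := by omega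
      simp only [this, if_false]
      have h2 : m + j - m = j := by omega
      rw [h2]
      exact h

end Translates

/-! ### the free (unbounded) region -/

def Gset : Set V3 := {p | p 0 < 0} ∪ {p | 2 < p 0} ∪ {p | 1 < p 1 + p 2} ∪
    {p | p 2 - p 1 < -(21/20)}

noncomputable def pinf : V3 := ![-1, -1, 0]

lemma pinf_mem_G : pinf ∈ Gset := by
  left; left; left
  show pinf 0 < 0
  norm_num [pinf]

lemma isPreconnected_halfspace (c : ℝ) (f : V3 → ℝ) (hf : IsLinearMap ℝ f) :
    IsPreconnected {p : V3 | c < f p} ∧ IsPreconnected {p : V3 | f p < c} :=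
  ⟨(convex_halfSpace_gt hf c).isPreconnected, (convex_halfSpace_lt hf c).isPreconnected⟩

lemma lin0 : IsLinearMap ℝ (fun p : V3 => p 0) := ⟨fun _ _ => rfl, fun _ _ => rfl⟩
lemma lin12 : IsLinearMap ℝ (fun p : V3 => p 1 + p 2) :=
  ⟨fun a b => by simp [Pi.add_apply]; ring, fun c a => by simp [Pi.smul_apply, smul_eq_mul]; ring⟩
lemma lin21 : IsLinearMap ℝ (fun p : V3 => p 2 - p 1) :=
  ⟨fun a b => by simp [Pi.add_apply]; ring, fun c a => by simp [Pi.smul_apply, smul_eq_mul]; ring⟩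

lemma isPreconnected_G : IsPreconnected Gset := by
  have h1 : IsPreconnected {p : V3 | p 0 < 0} := (isPreconnected_halfspace 0 _ lin0).2
  have h2 : IsPreconnected {p : V3 | 2 < p 0} := (isPreconnected_halfspace 2 _ lin0).1
  have h3 : IsPreconnected {p : V3 | 1 < p 1 + p 2} := (isPreconnected_halfspace 1 _ lin12).1
  have h4 : IsPreconnected {p : V3 | p 2 - p 1 < -(21/20)} :=
    (isPreconnected_halfspace (-(21/20)) _ lin21).2
  have h13 : IsPreconnected ({p : V3 | p 0 < 0} ∪ {p : V3 | 1 < p 1 + p 2}) := by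
    apply IsPreconnected.union (![-1, 3, 0]) _ _ h1 h3
    · show (![-1, 3, 0] : V3) 0 < 0
      norm_num
    · show (1:ℝ) < (![-1, 3, 0] : V3) 1 + (![-1, 3, 0] : V3) 2
      norm_num [Matrix.cons_val_two, Matrix.vecHead, Matrix.vecTail]
  have h132 : IsPreconnected (({p : V3 | p 0 < 0} ∪ {p : V3 | 1 < p 1 + p 2}) ∪
      {p : V3 | 2 < p 0}) := by
    apply IsPreconnected.union (![3, 3, 0]) _ _ h13 h2
    · right
      show (1:ℝ) < (![3, 3, 0] : V3) 1 + (![3, 3, 0] : V3) 2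
      norm_num [Matrix.cons_val_two, Matrix.vecHead, Matrix.vecTail]
    · show (2:ℝ) < (![3, 3, 0] : V3) 0
      norm_num
  have h1324 : IsPreconnected ((({p : V3 | p 0 < 0} ∪ {p : V3 | 1 < p 1 + p 2}) ∪
      {p : V3 | 2 < p 0}) ∪ {p : V3 | p 2 - p 1 < -(21/20)}) := by
    apply IsPreconnected.union (![-1, 0, -3]) _ _ h132 h4
    · left; left
      show (![-1, 0, -3] : V3) 0 < 0
      norm_num
    · show (![-1, 0, -3] : V3) 2 - (![-1, 0, -3] : V3) 1 < -(21/20)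
      norm_num [Matrix.cons_val_two, Matrix.vecHead, Matrix.vecTail]
  have : Gset = (({p : V3 | p 0 < 0} ∪ {p : V3 | 1 < p 1 + p 2}) ∪
      {p : V3 | 2 < p 0}) ∪ {p : V3 | p 2 - p 1 < -(21/20)} := by
    unfold Gset
    aesop
  rw [this]
  exact h1324

lemma G_sub_compl {m : ℕ} (hm : 1 ≤ m) : Gset ⊆ (UU m)ᶜ := by
  intro p hp hU
  rcases mem_UU_iff.1 hU with h | ⟨i, hi, h⟩ | ⟨j, hj, h⟩
  · obtain ⟨b1, b2, b3, b4, b5, b6, b7, b8⟩ := memK_bounds h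
    rcases hp with ((h' | h') | h') | h' <;> simp only [Set.mem_setOf_eq] at h' <;> linarith
  · obtain ⟨b1, b2, b3, b4, b5, b6, b7, b8, b9⟩ := memA_bounds h
    have hz1 := zf_le hm i
    have hz2 := zf_ge hm hi
    have hg := gp_pos hm
    have hcz : czv = -11/20 := rfl
    rcases hp with ((h' | h') | h') | h' <;> simp only [Set.mem_setOf_eq] at h' <;> linarith
  · obtain ⟨b1, b2, b3, b4, b5, b6, b7, b8, b9⟩ := memC_bounds h
    have hx1 := xs_ge hm j
    have hx2 := xs_le hm hj
    have : czv = -11/20 := rfl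
    rcases hp with ((h' | h') | h') | h' <;> simp only [Set.mem_setOf_eq] at h' <;> linarith

/-! ### component identification lemmas -/

lemma cc_eq_pinf {m : ℕ} (hm : 1 ≤ m) {p q : V3} (hpU : p ∉ UU m) (hq : q ∈ Gset)
    (hseg : ∀ u v : ℝ, 0 ≤ u → 0 < v → u + v = 1 → u • p + v • q ∉ UU m) :
    connectedComponentIn (UU m)ᶜ p = connectedComponentIn (UU m)ᶜ pinf := by
  have hsegsub : segment ℝ p q ⊆ (UU m)ᶜ := by
    rintro r ⟨u, v, hu, hv, huv, rfl⟩
    rcases eq_or_lt_of_le hv with hv0 | hv0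
    · have hu1 : u = 1 := by linarith
      subst hu1
      rw [← hv0]
      simpa using hpU
    · exact hseg u v hu hv0 huv
  have hW : IsPreconnected (segment ℝ p q ∪ Gset) := by
    apply IsPreconnected.union q (right_mem_segment ℝ p q) hq
      (convex_segment p q).isPreconnected isPreconnected_G
  have hWsub : segment ℝ p q ∪ Gset ⊆ (UU m)ᶜ :=
    Set.union_subset hsegsub (G_sub_compl hm)
  have hsubcc := hW.subset_connectedComponentIn
    (Set.mem_union_left _ (left_mem_segment ℝ p q)) hWsub
  exact connectedComponentIn_eq (hsubcc (Set.mem_union_right _ pinf_mem_G))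

lemma cc_eq_cell {m : ℕ} {V : Set V3} (hVo : IsOpen V) (hVc : IsPreconnected V)
    (hsub : V ⊆ (UU m)ᶜ) (hfr : frontier V ⊆ UU m) {p : V3} (hp : p ∈ V) :
    connectedComponentIn (UU m)ᶜ p = V := by
  apply Set.Subset.antisymm
  · have hcc : IsPreconnected (connectedComponentIn (UU m)ᶜ p) :=
      isPreconnected_connectedComponentIn
    apply hcc.subset_left_of_subset_union hVo isClosed_closure.isOpen_compl
    · exact Set.disjoint_left.2 fun a ha hb => hb (subset_closure ha)
    · intro x hx
      have hxU : x ∈ (UU m)ᶜ := connectedComponentIn_subset _ _ hx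
      by_cases hcl : x ∈ closure V
      · left
        by_contra hxV
        exact hxU (hfr ⟨hcl, by rwa [hVo.interior_eq]⟩)
      · right; exact hcl
    · exact ⟨p, mem_connectedComponentIn (hsub hp), hp⟩
  · exact hVc.subset_connectedComponentIn hp hsub

/-! ### the cells -/

noncomputable def Vc (m i j : ℕ) : Set V3 :=
  {p | p 1 < 0 ∧ p 2 - p 1 < zf m i ∧ zf m (i+1) < p 2 + p 1 ∧
    xs m j + 1 + czv < p 0 + p 2 ∧ p 0 - p 2 < xs m (j+1) - czv}

section Cells

variable {m i j : ℕ}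

lemma lin1 : IsLinearMap ℝ (fun p : V3 => p 1) := ⟨fun _ _ => rfl, fun _ _ => rfl⟩
lemma lin_zy : IsLinearMap ℝ (fun p : V3 => p 2 - p 1) :=
  ⟨fun a b => by simp [Pi.add_apply]; ring, fun c a => by simp [Pi.smul_apply, smul_eq_mul]; ring⟩
lemma lin_zy' : IsLinearMap ℝ (fun p : V3 => p 2 + p 1) :=
  ⟨fun a b => by simp [Pi.add_apply]; ring, fun c a => by simp [Pi.smul_apply, smul_eq_mul]; ring⟩
lemma lin_xz : IsLinearMap ℝ (fun p : V3 => p 0 + p 2) :=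
  ⟨fun a b => by simp [Pi.add_apply]; ring, fun c a => by simp [Pi.smul_apply, smul_eq_mul]; ring⟩
lemma lin_xz' : IsLinearMap ℝ (fun p : V3 => p 0 - p 2) :=
  ⟨fun a b => by simp [Pi.add_apply]; ring, fun c a => by simp [Pi.smul_apply, smul_eq_mul]; ring⟩

lemma Vc_eq : Vc m i j = {p : V3 | p 1 < 0} ∩ {p : V3 | p 2 - p 1 < zf m i} ∩
    {p : V3 | zf m (i+1) < p 2 + p 1} ∩ {p : V3 | xs m j + 1 + czv < p 0 + p 2} ∩
    {p : V3 | p 0 - p 2 < xs m (j+1) - czv} := by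
  ext p
  simp only [Vc, Set.mem_setOf_eq, Set.mem_inter_iff]
  tauto

lemma isOpen_Vc : IsOpen (Vc m i j) := by
  have c0 : Continuous fun p : V3 => p 0 := continuous_apply 0
  have c1 : Continuous fun p : V3 => p 1 := continuous_apply 1
  have c2 : Continuous fun p : V3 => p 2 := continuous_apply 2
  rw [Vc_eq]
  exact ((((isOpen_lt c1 continuous_const).inter
    (isOpen_lt (c2.sub c1) continuous_const)).inter
    (isOpen_lt continuous_const (c2.add c1))).inter
    (isOpen_lt continuous_const (c0.add c2))).inter
    (isOpen_lt (c0.sub c2) continuous_const)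

lemma isPreconnected_Vc : IsPreconnected (Vc m i j) := by
  apply Convex.isPreconnected
  rw [Vc_eq]
  exact ((((convex_halfSpace_lt lin1 0).inter
    (convex_halfSpace_lt lin_zy _)).inter
    (convex_halfSpace_gt lin_zy' _)).inter
    (convex_halfSpace_gt lin_xz _)).inter
    (convex_halfSpace_lt lin_xz' _)

/-- bounds valid on the closed version of the cell -/
lemma Vcl_bounds (hm : 1 ≤ m) (hi : i + 1 < m) (hj : j + 1 < m) {p : V3}
    (h1 : p 1 ≤ 0) (h2 : p 2 - p 1 ≤ zf m i) (h3 : zf m (i+1) ≤ p 2 + p 1)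
    (h4 : xs m j + 1 + czv ≤ p 0 + p 2) (h5 : p 0 - p 2 ≤ xs m (j+1) - czv) :
    -(gp m)/2 ≤ p 1 ∧ p 2 ≤ zf m i + p 1 ∧ zf m (i+1) - p 1 ≤ p 2 ∧
    czv + 3/8 + gp m/2 ≤ p 2 ∧ p 2 ≤ czv + 1/2 - gp m/2 ∧
    5/8 ≤ p 0 ∧ p 0 ≤ 7/8 := by
  have hzsucc := zf_succ (m := m) i
  have hz0 : zf m i ≤ czv + 1/2 - gp m / 2 := zf_le hm i
  have hz1 : czv + 3/8 + gp m / 2 ≤ zf m (i+1) := zf_ge hm (by omega)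
  have hx0 : 1/8 ≤ xs m j := xs_ge hm j
  have hx1 : xs m (j+1) ≤ 3/8 := xs_le hm (by omega)
  have hg := gp_pos hm
  have hcz : czv = -11/20 := rfl
  refine ⟨by linarith, by linarith, by linarith, by linarith, by linarith, by linarith, by linarith⟩

lemma Vc_sub_compl (hm : 1 ≤ m) (hi : i + 1 < m) (hj : j + 1 < m) :
    Vc m i j ⊆ (UU m)ᶜ := by
  intro p hp hU
  obtain ⟨c1, c2, c3, c4, c5⟩ := hp
  rcases mem_UU_iff.1 hU with h | ⟨i', hi', h⟩ | ⟨j', hj', h⟩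
  · exact absurd (memK_bounds h).1 (by linarith)
  · obtain ⟨b1, b2, b3, b4, b5, b6, b7, b8, b9⟩ := memA_bounds h
    rcases le_or_gt i' i with hc | hc
    · have := zf_anti hm hc
      linarith
    · have := zf_anti hm (show i + 1 ≤ i' by omega)
      linarith
  · obtain ⟨b1, b2, b3, b4, b5, b6, b7, b8, b9⟩ := memC_bounds h
    rcases le_or_gt j' j with hc | hc
    · have := xs_mono hm hc
      linarith
    · have := xs_mono hm (show j + 1 ≤ j' by omega)
      linarith

noncomputable def Vcl (m i j : ℕ) : Set V3 :=
  {p | p 1 ≤ 0 ∧ p 2 - p 1 ≤ zf m i ∧ zf m (i+1) ≤ p 2 + p 1 ∧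
    xs m j + 1 + czv ≤ p 0 + p 2 ∧ p 0 - p 2 ≤ xs m (j+1) - czv}

lemma isClosed_Vcl : IsClosed (Vcl m i j) := by
  have c0 : Continuous fun p : V3 => p 0 := continuous_apply 0
  have c1 : Continuous fun p : V3 => p 1 := continuous_apply 1
  have c2 : Continuous fun p : V3 => p 2 := continuous_apply 2
  have : Vcl m i j = {p : V3 | p 1 ≤ 0} ∩ {p : V3 | p 2 - p 1 ≤ zf m i} ∩
      {p : V3 | zf m (i+1) ≤ p 2 + p 1} ∩ {p : V3 | xs m j + 1 + czv ≤ p 0 + p 2} ∩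
      {p : V3 | p 0 - p 2 ≤ xs m (j+1) - czv} := by
    ext p
    simp only [Vcl, Set.mem_setOf_eq, Set.mem_inter_iff]
    tauto
  rw [this]
  exact ((((isClosed_le c1 continuous_const).inter
    (isClosed_le (c2.sub c1) continuous_const)).inter
    (isClosed_le continuous_const (c2.add c1))).inter
    (isClosed_le continuous_const (c0.add c2))).inter
    (isClosed_le (c0.sub c2) continuous_const)

lemma frontier_Vc_sub (hm : 1 ≤ m) (hi : i + 1 < m) (hj : j + 1 < m) :
    frontier (Vc m i j) ⊆ UU m := by
  have hg := gp_pos hm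
  have hgle := gp_le hm
  have hcz : czv = -11/20 := rfl
  intro p hp
  have hpc : p ∈ Vcl m i j := by
    refine closure_minimal ?_ isClosed_Vcl (frontier_subset_closure hp)
    intro q hq
    obtain ⟨c1, c2, c3, c4, c5⟩ := hq
    exact ⟨le_of_lt c1, le_of_lt c2, le_of_lt c3, le_of_lt c4, le_of_lt c5⟩
  obtain ⟨e1, e2, e3, e4, e5⟩ := hpc
  have hpnot : p ∉ Vc m i j := by
    intro hmem
    have h2 := hp.2
    rw [isOpen_Vc.interior_eq] at h2
    exact h2 hmem
  obtain ⟨B1, B2, B3, B4, B5, B6, B7⟩ := Vcl_bounds hm hi hj e1 e2 e3 e4 e5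
  rcases eq_or_lt_of_le e1 with q1 | q1
  · -- P1 : y = 0 : in F ⊆ K
    apply mem_UU_iff.2
    exact Or.inl (F_sub_K (F_mem (by linarith) (by linarith) q1 (by linarith) (by linarith)))
  rcases eq_or_lt_of_le e2 with q2 | q2
  · -- P2 : z - y = zf i : in A i
    apply mem_UU_iff.2
    refine Or.inr (Or.inl ⟨i, by omega, ?_⟩)
    refine mem_vadd_of _ (p - tA m i) ?_ (by funext k; simp)
    have h0 : (p - tA m i) 0 = p 0 := by simp [tA]
    have h1 : (p - tA m i) 1 = p 1 + 1 := by simp [tA]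
    have h2 : (p - tA m i) 2 = p 2 - zf m i := by simp [tA]
    exact wedge_mem (by rw [h0]; linarith) (by rw [h0]; linarith) (by rw [h1]; linarith)
      (by rw [h1]; linarith) (by rw [h1, h2]; linarith) (by rw [h2]; linarith)
  rcases eq_or_lt_of_le e3 with q3 | q3
  · -- P3 : z + y = zf (i+1) : in A (i+1)
    apply mem_UU_iff.2
    refine Or.inr (Or.inl ⟨i+1, hi, ?_⟩)
    refine mem_vadd_of _ (p - tA m (i+1)) ?_ (by funext k; simp)
    have h0 : (p - tA m (i+1)) 0 = p 0 := by simp [tA]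
    have h1 : (p - tA m (i+1)) 1 = p 1 + 1 := by simp [tA]
    have h2 : (p - tA m (i+1)) 2 = p 2 - zf m (i+1) := by simp [tA]
    exact pyr_mem (by rw [h2, h0]; linarith) (by rw [h2, h0]; linarith)
      (by rw [h2, h1]; linarith) (by rw [h2, h1]; linarith) (by rw [h2]; linarith)
  rcases eq_or_lt_of_le e4 with q4 | q4
  · -- P4 : x + z = xs j + 1 + czv : in C j
    apply mem_UU_iff.2
    refine Or.inr (Or.inr ⟨j, by omega, ?_⟩)
    refine mem_vadd_of _ (p - tC m j) ?_ (by funext k; simp)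
    have h0 : (p - tC m j) 0 = p 0 - xs m j := by simp [tC]
    have h1 : (p - tC m j) 1 = p 1 + 1/2 := by simp [tC]; ring
    have h2 : (p - tC m j) 2 = p 2 - czv := by simp [tC]
    exact pyr_mem (by rw [h2, h0]; linarith) (by rw [h2, h0]; linarith)
      (by rw [h2, h1]; linarith) (by rw [h2, h1]; linarith) (by rw [h2]; linarith)
  rcases eq_or_lt_of_le e5 with q5 | q5
  · -- P5 : x - z = xs (j+1) - czv : in C (j+1)
    apply mem_UU_iff.2
    refine Or.inr (Or.inr ⟨j+1, hj, ?_⟩)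
    refine mem_vadd_of _ (p - tC m (j+1)) ?_ (by funext k; simp)
    have h0 : (p - tC m (j+1)) 0 = p 0 - xs m (j+1) := by simp [tC]
    have h1 : (p - tC m (j+1)) 1 = p 1 + 1/2 := by simp [tC]; ring
    have h2 : (p - tC m (j+1)) 2 = p 2 - czv := by simp [tC]
    exact pyr_mem (by rw [h2, h0]; linarith) (by rw [h2, h0]; linarith)
      (by rw [h2, h1]; linarith) (by rw [h2, h1]; linarith) (by rw [h2]; linarith)
  exact absurd ⟨q1, q2, q3, q4, q5⟩ hpnot

end Cells

/-! ### witnesses and touching points of the cells -/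

noncomputable def pw (m i j : ℕ) : V3 :=
  ![xs m j + (1 + dl m)/2, -(gp m)/4, zf m i - gp m/2]

noncomputable def topc (m i j : ℕ) : V3 :=
  ![xs m j + (1 + dl m)/2, 0, zf m i - gp m/2]

section Witness

variable {m i j : ℕ}

lemma pw_mem_aux (hm : 1 ≤ m) (hi : i + 1 < m) (hj : j + 1 < m) {y : ℝ}
    (hy1 : -(gp m)/4 ≤ y) (hy0 : y < 0) :
    (![xs m j + (1 + dl m)/2, y, zf m i - gp m/2] : V3) ∈ Vc m i j := by
  have hg := gp_pos hm
  have him : (i:ℝ) + 2 ≤ (m:ℝ) := by exact_mod_cast hi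
  have hzi : zf m i = czv + 1/2 - gp m/2 - i * gp m := rfl
  have hxj : xs m (j+1) = xs m j + dl m := xs_succ j
  have hzsucc : zf m (i+1) = zf m i - gp m := zf_succ i
  have hdl : dl m = 2*(m:ℝ)*gp m - gp m := dl_eq
  refine ⟨?_, ?_, ?_, ?_, ?_⟩ <;>
    simp only [Matrix.cons_val_zero, Matrix.cons_val_one, Matrix.head_cons, Matrix.cons_val_two,
      Matrix.vecHead, Matrix.vecTail, Function.comp_apply, Fin.succ_zero_eq_one]
  · exact hy0
  · linarith
  · linarith
  · nlinarith
  · nlinarith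

lemma pw_mem (hm : 1 ≤ m) (hi : i + 1 < m) (hj : j + 1 < m) : pw m i j ∈ Vc m i j := by
  have hg := gp_pos hm
  exact pw_mem_aux hm hi hj le_rfl (by linarith)

lemma topc_mem_closure (hm : 1 ≤ m) (hi : i + 1 < m) (hj : j + 1 < m) :
    topc m i j ∈ closure (Vc m i j) := by
  have hg := gp_pos hm
  rw [Metric.mem_closure_iff]
  intro ε hε
  set s := min (ε/2) (gp m / 4) with hs
  have hs0 : 0 < s := by
    apply lt_min <;> [linarith; linarith]
  refine ⟨![xs m j + (1 + dl m)/2, -s, zf m i - gp m/2], ?_, ?_⟩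
  · apply pw_mem_aux hm hi hj
    · have : s ≤ gp m / 4 := min_le_right _ _
      linarith
    · linarith
  · rw [dist_pi_lt_iff hε]
    intro b
    have hsε : s < ε := lt_of_le_of_lt (min_le_left _ _) (by linarith)
    fin_cases b
    · simp [topc, Real.dist_eq]
      exact hε
    · simp only [topc, Real.dist_eq]
      norm_num
      rw [abs_of_pos hs0]
      exact hsε
    · simp [topc, Real.dist_eq]
      exact hε

lemma topc_mem_F (hm : 1 ≤ m) (hi : i + 1 < m) (hj : j + 1 < m) : topc m i j ∈ Fwarm := by
  have hg := gp_pos hm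
  have hgle := gp_le hm
  have hmgle := mgp_le hm
  have hx0 : 1/8 ≤ xs m j := xs_ge hm j
  have hx1 : xs m j ≤ 3/8 := xs_le hm (by omega)
  have hz0 : zf m i ≤ czv + 1/2 - gp m / 2 := zf_le hm i
  have hz1 : czv + 3/8 + gp m / 2 ≤ zf m i := zf_ge hm (by omega)
  have hdl : dl m = 2*(m:ℝ)*gp m - gp m := dl_eq
  have hdl0 := dl_pos hm
  have hcz : czv = -11/20 := rfl
  apply F_mem <;>
    simp only [topc, Matrix.cons_val_zero, Matrix.cons_val_one, Matrix.head_cons,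
      Matrix.cons_val_two, Matrix.vecHead, Matrix.vecTail, Function.comp_apply,
      Fin.succ_zero_eq_one] <;> linarith

lemma Vc_disjoint (hm : 1 ≤ m) {i' j' : ℕ} (hi : i + 1 < m) (hj : j + 1 < m)
    (hi' : i' + 1 < m) (hj' : j' + 1 < m) (hne : i ≠ i' ∨ j ≠ j') :
    ∀ p, p ∈ Vc m i j → p ∈ Vc m i' j' → False := by
  intro p hp hp'
  obtain ⟨c1, c2, c3, c4, c5⟩ := hp
  obtain ⟨d1, d2, d3, d4, d5⟩ := hp'
  have hg := gp_pos hm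
  obtain ⟨B1, B2, B3, B4, B5, B6, B7⟩ := Vcl_bounds hm hi hj (le_of_lt c1) (le_of_lt c2)
    (le_of_lt c3) (le_of_lt c4) (le_of_lt c5)
  rcases hne with hne | hne
  · rcases Nat.lt_or_ge i i' with hc | hc
    · have := zf_anti hm (show i + 1 ≤ i' by omega)
      linarith
    · have := zf_anti hm (show i' + 1 ≤ i by omega)
      linarith
  · rcases Nat.lt_or_ge j j' with hc | hc
    · have := xs_mono hm (show j + 1 ≤ j' by omega)
      have hcz : czv = -11/20 := rfl
      linarith
    · have := xs_mono hm (show j' + 1 ≤ j by omega)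
      have hcz : czv = -11/20 := rfl
      linarith

end Witness

/-! ### least-index lemmas -/

lemma gap_tri {m : ℕ} (hm : 1 ≤ m) (s d : ℝ)
    (hd0 : xs m 0 - czv ≤ d) (hs : s ≤ xs m (m-1) + 1 + czv)
    (hng : ∀ l, l + 1 < m → ¬(xs m l + 1 + czv < s ∧ d < xs m (l+1) - czv)) :
    ∃ k < m, s ≤ xs m k + 1 + czv ∧ xs m k - czv ≤ d ∧ ∀ l < k, xs m l + 1 + czv < s := by
  classical
  have hPex : ∃ k, s ≤ xs m k + 1 + czv := ⟨m - 1, hs⟩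
  obtain ⟨k, hkm, hk1, hkmin⟩ : ∃ k, k < m ∧ (s ≤ xs m k + 1 + czv) ∧
      ∀ l < k, xs m l + 1 + czv < s := by
    refine ⟨Nat.find hPex, ?_, Nat.find_spec hPex, fun l hl => ?_⟩
    · have : Nat.find hPex ≤ m - 1 := Nat.find_min' hPex hs
      omega
    · have := Nat.find_min hPex hl
      linarith [not_le.1 this]
  refine ⟨k, hkm, hk1, ?_, hkmin⟩
  by_contra hcon
  push_neg at hcon
  rcases Nat.eq_zero_or_pos k with rfl | hk0
  · linarith
  · obtain ⟨k', rfl⟩ : ∃ k', k = k' + 1 := ⟨k - 1, by omega⟩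
    exact hng k' (by omega) ⟨hkmin k' (by omega), hcon⟩

lemma cover_tri {m : ℕ} (hm : 1 ≤ m) (x a : ℝ) (hover : dl m ≤ 1 - 2*a)
    (hlo : xs m 0 + a ≤ x) (hhi : x ≤ xs m (m-1) + 1 - a) :
    ∃ k < m, xs m k + a ≤ x ∧ x ≤ xs m k + 1 - a := by
  classical
  have hPex : ∃ k, x ≤ xs m k + 1 - a := ⟨m - 1, hhi⟩
  obtain ⟨k, hkm, hk1, hkmin⟩ : ∃ k, k < m ∧ (x ≤ xs m k + 1 - a) ∧
      ∀ l < k, xs m l + 1 - a < x := by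
    refine ⟨Nat.find hPex, ?_, Nat.find_spec hPex, fun l hl => ?_⟩
    · have : Nat.find hPex ≤ m - 1 := Nat.find_min' hPex hhi
      omega
    · have := Nat.find_min hPex hl
      linarith [not_le.1 this]
  refine ⟨k, hkm, ?_, hk1⟩
  rcases Nat.eq_zero_or_pos k with rfl | hk0
  · exact hlo
  · obtain ⟨k', rfl⟩ : ∃ k', k = k' + 1 := ⟨k - 1, by omega⟩
    have hmin := hkmin k' (by omega)
    have hxk : xs m (k' + 1) = xs m k' + dl m := xs_succ k'
    linarith

/-! ### escape lemmas -/

section Escape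

variable {m : ℕ} {p : V3}

lemma cc_of_G (hm : 1 ≤ m) (hpG : p ∈ Gset) :
    connectedComponentIn (UU m)ᶜ p = connectedComponentIn (UU m)ᶜ pinf := by
  have hsub := isPreconnected_G.subset_connectedComponentIn hpG (G_sub_compl hm)
  exact connectedComponentIn_eq (hsub pinf_mem_G)

lemma escape_z (hm : 1 ≤ m) (hpU : p ∉ UU m) (hy : -1 < p 1) (hz3 : p 2 < 3)
    (hnot : ∀ r : V3, r 0 = p 0 → r 1 = p 1 → p 2 < r 2 → r ∉ UU m) :
    connectedComponentIn (UU m)ᶜ p = connectedComponentIn (UU m)ᶜ pinf := by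
  refine cc_eq_pinf hm hpU (q := ![p 0, p 1, 3]) ?_ ?_
  · left; right
    show (1:ℝ) < (![p 0, p 1, 3] : V3) 1 + (![p 0, p 1, 3] : V3) 2
    simp
    linarith
  · intro u v hu hv huv
    apply hnot
    · simp only [Pi.add_apply, Pi.smul_apply, smul_eq_mul]
      simp
      linear_combination p 0 * huv
    · simp only [Pi.add_apply, Pi.smul_apply, smul_eq_mul]
      simp
      linear_combination p 1 * huv
    · simp only [Pi.add_apply, Pi.smul_apply, smul_eq_mul]
      simp
      nlinarith [mul_pos hv (sub_pos.2 hz3)]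

lemma escape_xpos (hm : 1 ≤ m) (hpU : p ∉ UU m) (hx3 : p 0 < 3)
    (hnot : ∀ r : V3, p 0 < r 0 → r 1 = p 1 → r 2 = p 2 → r ∉ UU m) :
    connectedComponentIn (UU m)ᶜ p = connectedComponentIn (UU m)ᶜ pinf := by
  refine cc_eq_pinf hm hpU (q := ![3, p 1, p 2]) ?_ ?_
  · left; left; right
    show (2:ℝ) < (![3, p 1, p 2] : V3) 0
    simp only [Matrix.cons_val_zero]
    norm_num
  · intro u v hu hv huv
    apply hnot
    · simp only [Pi.add_apply, Pi.smul_apply, smul_eq_mul]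
      simp
      nlinarith [mul_pos hv (sub_pos.2 hx3)]
    · simp only [Pi.add_apply, Pi.smul_apply, smul_eq_mul]
      simp
      linear_combination p 1 * huv
    · simp only [Pi.add_apply, Pi.smul_apply, smul_eq_mul]
      simp
      linear_combination p 2 * huv

lemma escape_xneg (hm : 1 ≤ m) (hpU : p ∉ UU m) (hx3 : -1 < p 0)
    (hnot : ∀ r : V3, r 0 < p 0 → r 1 = p 1 → r 2 = p 2 → r ∉ UU m) :
    connectedComponentIn (UU m)ᶜ p = connectedComponentIn (UU m)ᶜ pinf := by
  refine cc_eq_pinf hm hpU (q := ![-1, p 1, p 2]) ?_ ?_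
  · left; left; left
    show (![-1, p 1, p 2] : V3) 0 < 0
    simp only [Matrix.cons_val_zero]
    norm_num
  · intro u v hu hv huv
    apply hnot
    · simp only [Pi.add_apply, Pi.smul_apply, smul_eq_mul]
      simp
      nlinarith [mul_pos hv (show (0:ℝ) < p 0 - -1 by linarith)]
    · simp only [Pi.add_apply, Pi.smul_apply, smul_eq_mul]
      simp
      linear_combination p 1 * huv
    · simp only [Pi.add_apply, Pi.smul_apply, smul_eq_mul]
      simp
      linear_combination p 2 * huv

end Escape

/-! ### classification of near-facet complement points -/

section Classify

variable {m : ℕ} {p : V3}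

lemma classify_Z1 (hm : 1 ≤ m) (hpU : p ∉ UU m)
    (hy1 : -(gp m)/4 < p 1) (hy2 : p 1 < gp m/4)
    (hx0 : 0 ≤ p 0) (hz2 : p 2 < gp m/4) (hz : -(1/20) ≤ p 2) :
    connectedComponentIn (UU m)ᶜ p = connectedComponentIn (UU m)ᶜ pinf := by
  have hg := gp_pos hm
  have hgle := gp_le hm
  have hcz : czv = -11/20 := rfl
  have hKc : p 1 < 0 ∨ p 1 ≤ p 2 ∨ 1 < p 0 ∨ p 0 ≤ p 2 ∨ 1 - p 0 ≤ p 2 := by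
    by_contra hcon
    push_neg at hcon
    obtain ⟨h1, h2, h3, h4, h5⟩ := hcon
    apply hpU
    apply mem_UU_iff.2
    left
    rcases le_or_gt (p 2) 0 with hz0 | hz0
    · exact wedge_mem hx0 h3 h1 (by linarith) (by linarith) hz0
    · exact pyr_mem (le_of_lt h4) (le_of_lt h5) (le_of_lt h2) (by linarith) (le_of_lt hz0)
  apply escape_z hm hpU (by linarith) (by linarith)
  intro r e0 e1 e2 hU
  rcases mem_UU_iff.1 hU with hB | ⟨k, hk, hB⟩ | ⟨k, hk, hB⟩
  · obtain ⟨K1, K2, K3, K4, K5, K6, K7, K8⟩ := memK_bounds hB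
    rw [e0] at K5 K6 K7 K8
    rw [e1] at K1 K2 K3 K4
    rcases hKc with h | h | h | h | h <;> linarith
  · obtain ⟨A1, A2, A3, A4, A5, A6, A7, A8, A9⟩ := memA_bounds hB
    rw [e1] at A4
    have := zf_le hm k
    linarith
  · obtain ⟨C1, C2, C3, C4, C5, C6, C7, C8, C9⟩ := memC_bounds hB
    rw [e1] at C3 C4
    linarith

lemma classify_Z2 (hm : 1 ≤ m) (hpU : p ∉ UU m)
    (hy1 : 0 ≤ p 1) (hy2 : p 1 < gp m/4)
    (hx0 : 0 ≤ p 0) (hx1 : p 0 < 1 + gp m/4) (hz : p 2 < -(1/20)) :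
    connectedComponentIn (UU m)ᶜ p = connectedComponentIn (UU m)ᶜ pinf := by
  have hg := gp_pos hm
  have hgle := gp_le hm
  have hcz : czv = -11/20 := rfl
  have hx00 : xs m 0 = 1/8 := by unfold xs; norm_num
  rcases lt_or_ge (p 2 - p 1) (-1) with h2a | h2b
  · -- Z2a : below K
    rcases lt_or_ge (p 0) (1/8) with hxa | hxa
    · -- escape in -x direction
      apply escape_xneg hm hpU (by linarith)
      intro r e0 e1 e2 hU
      rcases mem_UU_iff.1 hU with hB | ⟨k, hk, hB⟩ | ⟨k, hk, hB⟩
      · obtain ⟨K1, K2, K3, K4, K5, K6, K7, K8⟩ := memK_bounds hB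
        rw [e1] at K4; rw [e2] at K4
        linarith
      · obtain ⟨A1, A2, A3, A4, A5, A6, A7, A8, A9⟩ := memA_bounds hB
        rw [e1] at A5; rw [e2] at A5
        have := zf_ge hm hk
        linarith
      · obtain ⟨C1, C2, C3, C4, C5, C6, C7, C8, C9⟩ := memC_bounds hB
        have := xs_ge hm k
        linarith
    · rcases lt_or_ge (p 2 - p 1) (-(21/20)) with hdz | hdz
      · exact cc_of_G hm (Or.inr hdz)
      · -- contradiction : p is inside the wedge of C 0
        exfalso
        apply hpU
        apply mem_UU_iff.2
        refine Or.inr (Or.inr ⟨0, by omega, ?_⟩)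
        refine mem_vadd_of _ (p - tC m 0) ?_ (by funext k; simp)
        have h0 : (p - tC m 0) 0 = p 0 - 1/8 := by simp [tC, hx00]
        have h1 : (p - tC m 0) 1 = p 1 + 1/2 := by simp [tC]; ring
        have h2 : (p - tC m 0) 2 = p 2 - czv := by simp [tC]
        exact wedge_mem (by rw [h0]; linarith) (by rw [h0]; linarith) (by rw [h1]; linarith)
          (by rw [h1]; linarith) (by rw [h1, h2]; linarith) (by rw [h2]; linarith)
  · -- Z2b : z ≥ y - 1
    have hx : 1 < p 0 := by
      by_contra hcon
      push_neg at hcon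
      exact hpU (mem_UU_iff.2 (Or.inl (wedge_mem hx0 hcon hy1 (by linarith) (by linarith)
        (by linarith))))
    rcases lt_or_ge (czv + p 1 + 1/2) (p 2) with hc1 | hc1
    · -- Z2b-i
      apply escape_xpos hm hpU (by linarith)
      intro r e0 e1 e2 hU
      rcases mem_UU_iff.1 hU with hB | ⟨k, hk, hB⟩ | ⟨k, hk, hB⟩
      · obtain ⟨K1, K2, K3, K4, K5, K6, K7, K8⟩ := memK_bounds hB
        linarith
      · obtain ⟨A1, A2, A3, A4, A5, A6, A7, A8, A9⟩ := memA_bounds hB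
        linarith
      · obtain ⟨C1, C2, C3, C4, C5, C6, C7, C8, C9⟩ := memC_bounds hB
        rw [e1] at C3; rw [e2] at C3
        linarith
    rcases lt_or_ge (czv + 1/2 - p 1) (p 2) with hc2 | hc2
    · -- Z2b-ii
      apply escape_xpos hm hpU (by linarith)
      intro r e0 e1 e2 hU
      rcases mem_UU_iff.1 hU with hB | ⟨k, hk, hB⟩ | ⟨k, hk, hB⟩
      · obtain ⟨K1, K2, K3, K4, K5, K6, K7, K8⟩ := memK_bounds hB
        linarith
      · obtain ⟨A1, A2, A3, A4, A5, A6, A7, A8, A9⟩ := memA_bounds hB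
        linarith
      · obtain ⟨C1, C2, C3, C4, C5, C6, C7, C8, C9⟩ := memC_bounds hB
        rw [e1] at C4; rw [e2] at C4
        linarith
    rcases lt_or_ge czv (p 2) with hc3 | hc3
    · -- Z2b-iii
      have hCc : ∀ l < m, xs m l + 1 + czv < p 0 + p 2 := by
        intro l hl
        by_contra hcon
        push_neg at hcon
        apply hpU
        apply mem_UU_iff.2
        refine Or.inr (Or.inr ⟨l, hl, ?_⟩)
        refine mem_vadd_of _ (p - tC m l) ?_ (by funext k; simp)
        have h0 : (p - tC m l) 0 = p 0 - xs m l := by simp [tC]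
        have h1 : (p - tC m l) 1 = p 1 + 1/2 := by simp [tC]; ring
        have h2 : (p - tC m l) 2 = p 2 - czv := by simp [tC]
        have hxl := xs_le hm hl
        exact pyr_mem (by rw [h2, h0]; linarith) (by rw [h2, h0]; linarith)
          (by rw [h2, h1]; linarith) (by rw [h2, h1]; linarith) (by rw [h2]; linarith)
      apply escape_xpos hm hpU (by linarith)
      intro r e0 e1 e2 hU
      rcases mem_UU_iff.1 hU with hB | ⟨k, hk, hB⟩ | ⟨k, hk, hB⟩
      · obtain ⟨K1, K2, K3, K4, K5, K6, K7, K8⟩ := memK_bounds hB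
        linarith
      · obtain ⟨A1, A2, A3, A4, A5, A6, A7, A8, A9⟩ := memA_bounds hB
        linarith
      · obtain ⟨C1, C2, C3, C4, C5, C6, C7, C8, C9⟩ := memC_bounds hB
        rw [e2] at C9
        have := hCc k hk
        linarith
    · -- Z2b-iv : contradiction, p in wedge of C 0
      exfalso
      apply hpU
      apply mem_UU_iff.2
      refine Or.inr (Or.inr ⟨0, by omega, ?_⟩)
      refine mem_vadd_of _ (p - tC m 0) ?_ (by funext k; simp)
      have h0 : (p - tC m 0) 0 = p 0 - 1/8 := by simp [tC, hx00]
      have h1 : (p - tC m 0) 1 = p 1 + 1/2 := by simp [tC]; ring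
      have h2 : (p - tC m 0) 2 = p 2 - czv := by simp [tC]
      exact wedge_mem (by rw [h0]; linarith) (by rw [h0]; linarith) (by rw [h1]; linarith)
        (by rw [h1]; linarith) (by rw [h1, h2]; linarith) (by rw [h2]; linarith)

lemma classify_Z3a (hm : 1 ≤ m) (hpU : p ∉ UU m)
    (hy0 : p 1 < 0) (hy1 : -(gp m)/4 < p 1) (hx0 : 0 ≤ p 0)
    (hz2 : p 2 < gp m/4) (hza : zf m 0 - p 1 < p 2) :
    connectedComponentIn (UU m)ᶜ p = connectedComponentIn (UU m)ᶜ pinf := by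
  have hg := gp_pos hm
  have hgle := gp_le hm
  have hcz : czv = -11/20 := rfl
  have hm1 : (1:ℝ) ≤ (m:ℝ) := by exact_mod_cast hm
  have hzf0 : zf m 0 = czv + 1/2 - gp m/2 := by unfold zf; norm_num
  have hzf0ge : czv + 3/8 + gp m/2 ≤ zf m 0 := zf_ge hm (by omega)
  rcases lt_or_ge (p 0 - p 2) (xs m 0 - czv) with hi | hi
  · apply escape_z hm hpU (by linarith) (by linarith)
    intro r e0 e1 e2 hU
    rcases mem_UU_iff.1 hU with hB | ⟨k, hk, hB⟩ | ⟨k, hk, hB⟩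
    · obtain ⟨K1, K2, K3, K4, K5, K6, K7, K8⟩ := memK_bounds hB
      rw [e1] at K1; linarith
    · obtain ⟨A1, A2, A3, A4, A5, A6, A7, A8, A9⟩ := memA_bounds hB
      rw [e1] at A4
      have := zf_anti hm (Nat.zero_le k)
      linarith
    · obtain ⟨C1, C2, C3, C4, C5, C6, C7, C8, C9⟩ := memC_bounds hB
      rw [e0] at C8
      have := xs_mono hm (Nat.zero_le k)
      linarith
  rcases lt_or_ge (xs m (m-1) + 1 + czv) (p 0 + p 2) with hii | hii
  · apply escape_z hm hpU (by linarith) (by linarith)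
    intro r e0 e1 e2 hU
    rcases mem_UU_iff.1 hU with hB | ⟨k, hk, hB⟩ | ⟨k, hk, hB⟩
    · obtain ⟨K1, K2, K3, K4, K5, K6, K7, K8⟩ := memK_bounds hB
      rw [e1] at K1; linarith
    · obtain ⟨A1, A2, A3, A4, A5, A6, A7, A8, A9⟩ := memA_bounds hB
      rw [e1] at A4
      have := zf_anti hm (Nat.zero_le k)
      linarith
    · obtain ⟨C1, C2, C3, C4, C5, C6, C7, C8, C9⟩ := memC_bounds hB
      rw [e0] at C9
      have := xs_mono hm (show k ≤ m - 1 by omega)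
      linarith
  by_cases hgap : ∃ l, l + 1 < m ∧ xs m l + 1 + czv < p 0 + p 2 ∧ p 0 - p 2 < xs m (l+1) - czv
  · obtain ⟨l, hl, hg1, hg2⟩ := hgap
    apply escape_z hm hpU (by linarith) (by linarith)
    intro r e0 e1 e2 hU
    rcases mem_UU_iff.1 hU with hB | ⟨k, hk, hB⟩ | ⟨k, hk, hB⟩
    · obtain ⟨K1, K2, K3, K4, K5, K6, K7, K8⟩ := memK_bounds hB
      rw [e1] at K1; linarith
    · obtain ⟨A1, A2, A3, A4, A5, A6, A7, A8, A9⟩ := memA_bounds hB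
      rw [e1] at A4
      have := zf_anti hm (Nat.zero_le k)
      linarith
    · obtain ⟨C1, C2, C3, C4, C5, C6, C7, C8, C9⟩ := memC_bounds hB
      rcases le_or_gt k l with hc | hc
      · rw [e0] at C9
        have := xs_mono hm hc
        linarith
      · rw [e0] at C8
        have := xs_mono hm (show l + 1 ≤ k by omega)
        linarith
  · obtain ⟨k, hk, hks, hkd, hkmin⟩ := gap_tri hm (p 0 + p 2) (p 0 - p 2) hi hii
      (by
        intro l hl hcon
        exact hgap ⟨l, hl, hcon.1, hcon.2⟩)
    have hyk : czv + p 1 + 1/2 < p 2 := by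
      by_contra hcon
      push_neg at hcon
      apply hpU
      apply mem_UU_iff.2
      refine Or.inr (Or.inr ⟨k, hk, ?_⟩)
      refine mem_vadd_of _ (p - tC m k) ?_ (by funext b; simp)
      have h0 : (p - tC m k) 0 = p 0 - xs m k := by simp [tC]
      have h1 : (p - tC m k) 1 = p 1 + 1/2 := by simp [tC]; ring
      have h2 : (p - tC m k) 2 = p 2 - czv := by simp [tC]
      exact pyr_mem (by rw [h2, h0]; linarith) (by rw [h2, h0]; linarith)
        (by rw [h2, h1]; linarith) (by rw [h2, h1]; linarith) (by rw [h2]; linarith)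
    apply escape_z hm hpU (by linarith) (by linarith)
    intro r e0 e1 e2 hU
    rcases mem_UU_iff.1 hU with hB | ⟨k', hk', hB⟩ | ⟨k', hk', hB⟩
    · obtain ⟨K1, K2, K3, K4, K5, K6, K7, K8⟩ := memK_bounds hB
      rw [e1] at K1; linarith
    · obtain ⟨A1, A2, A3, A4, A5, A6, A7, A8, A9⟩ := memA_bounds hB
      rw [e1] at A4
      have := zf_anti hm (Nat.zero_le k')
      linarith
    · obtain ⟨C1, C2, C3, C4, C5, C6, C7, C8, C9⟩ := memC_bounds hB
      rcases lt_trichotomy k' k with hc | hc | hc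
      · rw [e0] at C9
        have := hkmin k' hc
        linarith
      · subst hc
        rw [e1] at C3
        linarith
      · have hd' : p 0 - p 2 < xs m k' - czv := by
          by_contra hcon2
          push_neg at hcon2
          have h1 := xs_mono hm (show k + 1 ≤ k' by omega)
          have h2 := xs_succ (m := m) k
          have h3 : gp m ≤ dl m := by rw [dl_eq]; nlinarith
          linarith
        rw [e0] at C8
        linarith

lemma classify_Z3b (hm : 1 ≤ m) (hpU : p ∉ UU m) {k : ℕ} (hk : k < m)
    (hy0 : p 1 < 0) (hy1 : -(gp m)/4 < p 1) (hx0 : 0 ≤ p 0) (hx1 : p 0 < 1 + gp m/4)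
    (hb1 : zf m k + p 1 ≤ p 2) (hb2 : p 2 ≤ zf m k - p 1) :
    connectedComponentIn (UU m)ᶜ p = connectedComponentIn (UU m)ᶜ pinf := by
  have hg := gp_pos hm
  have hgle := gp_le hm
  have hcz : czv = -11/20 := rfl
  have hzfk1 := zf_le hm k
  have hzfk2 := zf_ge hm hk
  -- certificates against the other slabs
  have hAlt : ∀ l, l < k → zf m l + p 1 > p 2 := by
    intro l hl
    have h1 := zf_anti hm (show l + 1 ≤ k by omega)
    have h2 := zf_succ (m := m) l
    linarith
  have hAgt : ∀ l, k < l → p 2 > zf m l - p 1 := by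
    intro l hl
    have h1 := zf_anti hm (show k + 1 ≤ l by omega)
    have h2 := zf_succ (m := m) k
    linarith
  by_cases hxg : 1 < p 0
  · -- B1 : right of everything
    have hCc : ∀ l, l < m → xs m l + 1 + czv < p 0 + p 2 := by
      intro l hl
      by_contra hcon
      push_neg at hcon
      apply hpU
      apply mem_UU_iff.2
      refine Or.inr (Or.inr ⟨l, hl, ?_⟩)
      refine mem_vadd_of _ (p - tC m l) ?_ (by funext b; simp)
      have h0 : (p - tC m l) 0 = p 0 - xs m l := by simp [tC]
      have h1 : (p - tC m l) 1 = p 1 + 1/2 := by simp [tC]; ring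
      have h2 : (p - tC m l) 2 = p 2 - czv := by simp [tC]
      have hxl := xs_le hm hl
      exact pyr_mem (by rw [h2, h0]; linarith) (by rw [h2, h0]; linarith)
        (by rw [h2, h1]; linarith) (by rw [h2, h1]; linarith) (by rw [h2]; linarith)
    apply escape_xpos hm hpU (by linarith)
    intro r e0 e1 e2 hU
    rcases mem_UU_iff.1 hU with hB | ⟨l, hl, hB⟩ | ⟨l, hl, hB⟩
    · obtain ⟨K1, K2, K3, K4, K5, K6, K7, K8⟩ := memK_bounds hB
      rw [e1] at K1; linarith
    · obtain ⟨A1, A2, A3, A4, A5, A6, A7, A8, A9⟩ := memA_bounds hB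
      linarith
    · obtain ⟨C1, C2, C3, C4, C5, C6, C7, C8, C9⟩ := memC_bounds hB
      rw [e2] at C9
      have := hCc l hl
      linarith
  · push_neg at hxg
    have hbev : p 0 < p 2 - zf m k ∨ 1 - p 0 < p 2 - zf m k := by
      by_contra hcon
      push_neg at hcon
      obtain ⟨h1, h2⟩ := hcon
      apply hpU
      apply mem_UU_iff.2
      refine Or.inr (Or.inl ⟨k, hk, ?_⟩)
      refine mem_vadd_of _ (p - tA m k) ?_ (by funext b; simp)
      have e0 : (p - tA m k) 0 = p 0 := by simp [tA]
      have e1 : (p - tA m k) 1 = p 1 + 1 := by simp [tA]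
      have e2 : (p - tA m k) 2 = p 2 - zf m k := by simp [tA]
      rcases le_or_gt (p 2 - zf m k) 0 with hz0 | hz0
      · exact wedge_mem (by rw [e0]; linarith) (by rw [e0]; linarith) (by rw [e1]; linarith)
          (by rw [e1]; linarith) (by rw [e1, e2]; linarith) (by rw [e2]; linarith)
      · exact pyr_mem (by rw [e2, e0]; linarith) (by rw [e2, e0]; linarith)
          (by rw [e2, e1]; linarith) (by rw [e2, e1]; linarith) (by rw [e2]; linarith)
    rcases hbev with hbev | hbev
    · -- B2 : left bevel, escape -x
      apply escape_xneg hm hpU (by linarith)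
      intro r e0 e1 e2 hU
      rcases mem_UU_iff.1 hU with hB | ⟨l, hl, hB⟩ | ⟨l, hl, hB⟩
      · obtain ⟨K1, K2, K3, K4, K5, K6, K7, K8⟩ := memK_bounds hB
        rw [e1] at K1; linarith
      · obtain ⟨A1, A2, A3, A4, A5, A6, A7, A8, A9⟩ := memA_bounds hB
        rcases lt_trichotomy l k with hc | hc | hc
        · have := hAlt l hc
          rw [e1, e2] at A5
          linarith
        · subst hc
          rw [e2] at A8
          linarith
        · have := hAgt l hc
          rw [e1, e2] at A4
          linarith
      · obtain ⟨C1, C2, C3, C4, C5, C6, C7, C8, C9⟩ := memC_bounds hB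
        have := xs_ge hm l
        linarith
    · -- B3 : right bevel, escape +x
      have hCc : ∀ l, l < m → xs m l + 1 + czv < p 0 + p 2 := by
        intro l hl
        by_contra hcon
        push_neg at hcon
        apply hpU
        apply mem_UU_iff.2
        refine Or.inr (Or.inr ⟨l, hl, ?_⟩)
        refine mem_vadd_of _ (p - tC m l) ?_ (by funext b; simp)
        have h0 : (p - tC m l) 0 = p 0 - xs m l := by simp [tC]
        have h1 : (p - tC m l) 1 = p 1 + 1/2 := by simp [tC]; ring
        have h2 : (p - tC m l) 2 = p 2 - czv := by simp [tC]
        have hxl := xs_le hm hl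
        exact pyr_mem (by rw [h2, h0]; linarith) (by rw [h2, h0]; linarith)
          (by rw [h2, h1]; linarith) (by rw [h2, h1]; linarith) (by rw [h2]; linarith)
      apply escape_xpos hm hpU (by linarith)
      intro r e0 e1 e2 hU
      rcases mem_UU_iff.1 hU with hB | ⟨l, hl, hB⟩ | ⟨l, hl, hB⟩
      · obtain ⟨K1, K2, K3, K4, K5, K6, K7, K8⟩ := memK_bounds hB
        rw [e1] at K1; linarith
      · obtain ⟨A1, A2, A3, A4, A5, A6, A7, A8, A9⟩ := memA_bounds hB
        rcases lt_trichotomy l k with hc | hc | hc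
        · have := hAlt l hc
          rw [e1, e2] at A5
          linarith
        · subst hc
          rw [e2] at A9
          linarith
        · have := hAgt l hc
          rw [e1, e2] at A4
          linarith
      · obtain ⟨C1, C2, C3, C4, C5, C6, C7, C8, C9⟩ := memC_bounds hB
        rw [e2] at C9
        have := hCc l hl
        linarith

lemma classify_Z3c (hm : 1 ≤ m) (hpU : p ∉ UU m) {i : ℕ} (hi : i + 1 < m)
    (hy0 : p 1 < 0) (hy1 : -(gp m)/4 < p 1) (hx0 : 0 ≤ p 0) (hx1 : p 0 < 1 + gp m/4)
    (hs1 : zf m (i+1) - p 1 < p 2) (hs2 : p 2 < zf m i + p 1) :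
    (∃ i' j', i' + 1 < m ∧ j' + 1 < m ∧ p ∈ Vc m i' j') ∨
    connectedComponentIn (UU m)ᶜ p = connectedComponentIn (UU m)ᶜ pinf := by
  have hg := gp_pos hm
  have hgle := gp_le hm
  have hcz : czv = -11/20 := rfl
  have hzfi1 := zf_le hm i
  have hzfi2 := zf_ge hm (show i + 1 < m from hi)
  have hAlt : ∀ l, l ≤ i → zf m l + p 1 > p 2 := by
    intro l hl
    have h1 := zf_anti hm hl
    linarith
  have hAgt : ∀ l, i + 1 ≤ l → p 2 > zf m l - p 1 := by
    intro l hl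
    have h1 := zf_anti hm hl
    linarith
  rcases lt_or_ge (p 0 - p 2) (xs m 0 - czv) with htri1 | htri1
  · right
    apply escape_xneg hm hpU (by linarith)
    intro r e0 e1 e2 hU
    rcases mem_UU_iff.1 hU with hB | ⟨l, hl, hB⟩ | ⟨l, hl, hB⟩
    · obtain ⟨K1, K2, K3, K4, K5, K6, K7, K8⟩ := memK_bounds hB
      rw [e1] at K1; linarith
    · obtain ⟨A1, A2, A3, A4, A5, A6, A7, A8, A9⟩ := memA_bounds hB
      rcases le_or_gt l i with hc | hc
      · have := hAlt l hc
        rw [e1, e2] at A5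
        linarith
      · have := hAgt l hc
        rw [e1, e2] at A4
        linarith
    · obtain ⟨C1, C2, C3, C4, C5, C6, C7, C8, C9⟩ := memC_bounds hB
      have := xs_mono hm (Nat.zero_le l)
      rw [e2] at C8
      linarith
  rcases lt_or_ge (xs m (m-1) + 1 + czv) (p 0 + p 2) with htri2 | htri2
  · right
    apply escape_xpos hm hpU (by linarith)
    intro r e0 e1 e2 hU
    rcases mem_UU_iff.1 hU with hB | ⟨l, hl, hB⟩ | ⟨l, hl, hB⟩
    · obtain ⟨K1, K2, K3, K4, K5, K6, K7, K8⟩ := memK_bounds hB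
      rw [e1] at K1; linarith
    · obtain ⟨A1, A2, A3, A4, A5, A6, A7, A8, A9⟩ := memA_bounds hB
      rcases le_or_gt l i with hc | hc
      · have := hAlt l hc
        rw [e1, e2] at A5
        linarith
      · have := hAgt l hc
        rw [e1, e2] at A4
        linarith
    · obtain ⟨C1, C2, C3, C4, C5, C6, C7, C8, C9⟩ := memC_bounds hB
      have := xs_mono hm (show l ≤ m - 1 by omega)
      rw [e2] at C9
      linarith
  by_cases hgap : ∃ l, l + 1 < m ∧ xs m l + 1 + czv < p 0 + p 2 ∧ p 0 - p 2 < xs m (l+1) - czv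
  · obtain ⟨l, hl, hg1, hg2⟩ := hgap
    left
    exact ⟨i, l, hi, hl, hy0, by linarith, by linarith, hg1, hg2⟩
  · exfalso
    obtain ⟨k, hk, hks, hkd, hkmin⟩ := gap_tri hm (p 0 + p 2) (p 0 - p 2) htri1 htri2
      (by
        intro l hl hcon
        exact hgap ⟨l, hl, hcon.1, hcon.2⟩)
    apply hpU
    apply mem_UU_iff.2
    refine Or.inr (Or.inr ⟨k, hk, ?_⟩)
    refine mem_vadd_of _ (p - tC m k) ?_ (by funext b; simp)
    have h0 : (p - tC m k) 0 = p 0 - xs m k := by simp [tC]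
    have h1 : (p - tC m k) 1 = p 1 + 1/2 := by simp [tC]; ring
    have h2 : (p - tC m k) 2 = p 2 - czv := by simp [tC]
    exact pyr_mem (by rw [h2, h0]; linarith) (by rw [h2, h0]; linarith)
      (by rw [h2, h1]; linarith) (by rw [h2, h1]; linarith) (by rw [h2]; linarith)

lemma classify_Z3d (hm : 1 ≤ m) (hpU : p ∉ UU m)
    (hy0 : p 1 < 0) (hy1 : -(gp m)/4 < p 1) (hx0 : 0 ≤ p 0) (hx1 : p 0 < 1 + gp m/4)
    (hzd : p 2 < zf m (m-1) + p 1) :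
    connectedComponentIn (UU m)ᶜ p = connectedComponentIn (UU m)ᶜ pinf := by
  have hg := gp_pos hm
  have hgle := gp_le hm
  have hmg := mgp_le hm
  have hcz : czv = -11/20 := rfl
  have hm1 : (1:ℝ) ≤ (m:ℝ) := by exact_mod_cast hm
  have hx00 : xs m 0 = 1/8 := by unfold xs; norm_num
  have hcast : ((m - 1 : ℕ) : ℝ) = (m:ℝ) - 1 := by
    rw [Nat.cast_sub hm]; norm_num
  have hzfm : zf m (m-1) = czv + 1/2 + gp m/2 - (m:ℝ) * gp m := by
    unfold zf
    rw [hcast]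
    ring
  have hAc : ∀ l, l < m → zf m l + p 1 > p 2 := by
    intro l hl
    have := zf_anti hm (show l ≤ m - 1 by omega)
    linarith
  rcases lt_or_ge (p 2 - p 1) (-(21/20)) with hd1 | hd1
  · exact cc_of_G hm (Or.inr hd1)
  rcases le_or_gt (p 2) czv with hd2 | hd2
  · rcases lt_or_ge (p 0) (1/8) with hxa | hxa
    · apply escape_xneg hm hpU (by linarith)
      intro r e0 e1 e2 hU
      rcases mem_UU_iff.1 hU with hB | ⟨l, hl, hB⟩ | ⟨l, hl, hB⟩
      · obtain ⟨K1, K2, K3, K4, K5, K6, K7, K8⟩ := memK_bounds hB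
        rw [e1] at K1; linarith
      · obtain ⟨A1, A2, A3, A4, A5, A6, A7, A8, A9⟩ := memA_bounds hB
        have := hAc l hl
        rw [e1, e2] at A5
        linarith
      · obtain ⟨C1, C2, C3, C4, C5, C6, C7, C8, C9⟩ := memC_bounds hB
        have := xs_ge hm l
        linarith
    · exfalso
      apply hpU
      apply mem_UU_iff.2
      refine Or.inr (Or.inr ⟨0, by omega, ?_⟩)
      refine mem_vadd_of _ (p - tC m 0) ?_ (by funext b; simp)
      have h0 : (p - tC m 0) 0 = p 0 - 1/8 := by simp [tC, hx00]
      have h1 : (p - tC m 0) 1 = p 1 + 1/2 := by simp [tC]; ring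
      have h2 : (p - tC m 0) 2 = p 2 - czv := by simp [tC]
      exact wedge_mem (by rw [h0]; linarith) (by rw [h0]; linarith) (by rw [h1]; linarith)
        (by rw [h1]; linarith) (by rw [h1, h2]; linarith) (by rw [h2]; linarith)
  · -- czv < z, below the fins, pyramid levels
    have hmg2 : gp m ≤ (m:ℝ) * gp m := by nlinarith
    rcases lt_or_ge (p 0) (xs m 0 + (p 2 - czv)) with hlt | hlt
    · apply escape_xneg hm hpU (by linarith)
      intro r e0 e1 e2 hU
      rcases mem_UU_iff.1 hU with hB | ⟨l, hl, hB⟩ | ⟨l, hl, hB⟩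
      · obtain ⟨K1, K2, K3, K4, K5, K6, K7, K8⟩ := memK_bounds hB
        rw [e1] at K1; linarith
      · obtain ⟨A1, A2, A3, A4, A5, A6, A7, A8, A9⟩ := memA_bounds hB
        have := hAc l hl
        rw [e1, e2] at A5
        linarith
      · obtain ⟨C1, C2, C3, C4, C5, C6, C7, C8, C9⟩ := memC_bounds hB
        have := xs_mono hm (Nat.zero_le l)
        rw [e2] at C8
        linarith
    rcases lt_or_ge (xs m (m-1) + 1 - (p 2 - czv)) (p 0) with hgt | hgt
    · apply escape_xpos hm hpU (by linarith)
      intro r e0 e1 e2 hU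
      rcases mem_UU_iff.1 hU with hB | ⟨l, hl, hB⟩ | ⟨l, hl, hB⟩
      · obtain ⟨K1, K2, K3, K4, K5, K6, K7, K8⟩ := memK_bounds hB
        rw [e1] at K1; linarith
      · obtain ⟨A1, A2, A3, A4, A5, A6, A7, A8, A9⟩ := memA_bounds hB
        have := hAc l hl
        rw [e1, e2] at A5
        linarith
      · obtain ⟨C1, C2, C3, C4, C5, C6, C7, C8, C9⟩ := memC_bounds hB
        have := xs_mono hm (show l ≤ m - 1 by omega)
        rw [e2] at C9
        linarith
    · exfalso
      obtain ⟨k, hk, hc1, hc2⟩ := cover_tri hm (p 0) (p 2 - czv)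
        (by rw [dl_eq]; linarith) hlt hgt
      apply hpU
      apply mem_UU_iff.2
      refine Or.inr (Or.inr ⟨k, hk, ?_⟩)
      refine mem_vadd_of _ (p - tC m k) ?_ (by funext b; simp)
      have h0 : (p - tC m k) 0 = p 0 - xs m k := by simp [tC]
      have h1 : (p - tC m k) 1 = p 1 + 1/2 := by simp [tC]; ring
      have h2 : (p - tC m k) 2 = p 2 - czv := by simp [tC]
      exact pyr_mem (by rw [h2, h0]; linarith) (by rw [h2, h0]; linarith)
        (by rw [h2, h1]; linarith) (by rw [h2, h1]; linarith) (by rw [h2]; linarith)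

lemma classify (hm : 1 ≤ m) (hpU : p ∉ UU m)
    (hy1 : -(gp m)/4 < p 1) (hy2 : p 1 < gp m/4)
    (hx1 : p 0 < 1 + gp m/4) (hz2 : p 2 < gp m / 4) :
    (∃ i j, i + 1 < m ∧ j + 1 < m ∧ p ∈ Vc m i j) ∨
    connectedComponentIn (UU m)ᶜ p = connectedComponentIn (UU m)ᶜ pinf := by
  classical
  have hg := gp_pos hm
  have hgle := gp_le hm
  rcases lt_or_ge (p 0) 0 with hx0 | hx0
  · exact Or.inr (cc_of_G hm (Or.inl (Or.inl (Or.inl hx0))))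
  rcases le_or_gt (-(1/20)) (p 2) with hz | hz
  · exact Or.inr (classify_Z1 hm hpU hy1 hy2 hx0 hz2 hz)
  rcases le_or_gt 0 (p 1) with hy | hy
  · exact Or.inr (classify_Z2 hm hpU hy hy2 hx0 hx1 hz)
  rcases lt_or_ge (zf m 0 - p 1) (p 2) with hza | hza
  · exact Or.inr (classify_Z3a hm hpU hy hy1 hx0 hz2 hza)
  have hP0 : p 2 ≤ zf m 0 - p 1 := hza
  set k0 := Nat.findGreatest (fun k => p 2 ≤ zf m k - p 1) (m - 1) with hk0def
  have hPk0 : p 2 ≤ zf m k0 - p 1 :=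
    Nat.findGreatest_spec (P := fun k => p 2 ≤ zf m k - p 1) (Nat.zero_le _) hP0
  have hk0le : k0 ≤ m - 1 := Nat.findGreatest_le _
  have hk0m : k0 < m := by omega
  rcases le_or_gt (zf m k0 + p 1) (p 2) with hin | hout
  · exact Or.inr (classify_Z3b hm hpU hk0m hy hy1 hx0 hx1 hin hPk0)
  · rcases eq_or_lt_of_le hk0le with heq | hlt'
    · refine Or.inr (classify_Z3d hm hpU hy hy1 hx0 hx1 ?_)
      rw [← heq]
      exact hout
    · have hnP : ¬ (p 2 ≤ zf m (k0+1) - p 1) := by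
        apply Nat.findGreatest_is_greatest (P := fun k => p 2 ≤ zf m k - p 1) (n := m - 1)
        · rw [← hk0def]
          omega
        · omega
      push_neg at hnP
      exact classify_Z3c hm hpU (show k0 + 1 < m by omega) hy hy1 hx0 hx1 hnP hout

end Classify

/-! ### assembling the count -/

section Assemble

variable {m : ℕ}

lemma pinf_not_UU (hm : 1 ≤ m) : pinf ∉ UU m := G_sub_compl hm pinf_mem_G

lemma Vc_cc (hm : 1 ≤ m) {i j : ℕ} (hi : i + 1 < m) (hj : j + 1 < m) :
    connectedComponentIn (UU m)ᶜ (pw m i j) = Vc m i j :=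
  cc_eq_cell isOpen_Vc isPreconnected_Vc (Vc_sub_compl hm hi hj)
    (frontier_Vc_sub hm hi hj) (pw_mem hm hi hj)

/-- the ambient set of components that we count -/
def Sset (m : ℕ) : Set (Set V3) :=
  {C | (∃ x ∈ (UU m)ᶜ, C = connectedComponentIn (UU m)ᶜ x) ∧
    (closure C ∩ Fwarm).Nonempty}

lemma Vc_mem_Sset (hm : 1 ≤ m) {i j : ℕ} (hi : i + 1 < m) (hj : j + 1 < m) :
    Vc m i j ∈ Sset m := by
  constructor
  · exact ⟨pw m i j, Vc_sub_compl hm hi hj (pw_mem hm hi hj), (Vc_cc hm hi hj).symm⟩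
  · exact ⟨topc m i j, topc_mem_closure hm hi hj, topc_mem_F hm hi hj⟩

lemma Ocomp_mem_Sset (hm : 1 ≤ m) :
    connectedComponentIn (UU m)ᶜ pinf ∈ Sset m := by
  constructor
  · exact ⟨pinf, pinf_not_UU hm, rfl⟩
  · refine ⟨![0,0,0], ?_, ?_⟩
    · have hGsub : Gset ⊆ connectedComponentIn (UU m)ᶜ pinf :=
        isPreconnected_G.subset_connectedComponentIn pinf_mem_G (G_sub_compl hm)
      have : ![0,0,0] ∈ closure Gset := by
        rw [Metric.mem_closure_iff]
        intro ε hε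
        set s := min (ε/2) (1/2) with hs
        have hs0 : 0 < s := by
          apply lt_min <;> linarith
        refine ⟨![-s, -s, 0], Or.inl (Or.inl (Or.inl (by
          show (![-s, -s, 0] : V3) 0 < 0
          simp only [Matrix.cons_val_zero]
          linarith))), ?_⟩
        rw [dist_pi_lt_iff hε]
        intro b
        have hsε : s < ε := lt_of_le_of_lt (min_le_left _ _) (by linarith)
        fin_cases b
        · simp only [Real.dist_eq, Matrix.cons_val_zero]
          norm_num
          rw [abs_of_pos hs0]
          exact hsε
        · simp only [Real.dist_eq]
          simp
          rw [abs_of_pos hs0]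
          exact hsε
        · simp [Real.dist_eq]
          exact hε
      exact closure_mono hGsub this
    · exact F_mem (by norm_num) (by norm_num) (by norm_num) (by norm_num [Matrix.cons_val_two, Matrix.vecHead, Matrix.vecTail]) (by norm_num [Matrix.cons_val_two, Matrix.vecHead, Matrix.vecTail])

lemma Vc_ne_Ocomp (hm : 1 ≤ m) {i j : ℕ} (hi : i + 1 < m) (hj : j + 1 < m) :
    Vc m i j ≠ connectedComponentIn (UU m)ᶜ pinf := by
  intro heq
  have hp : pinf ∈ Vc m i j := by
    rw [heq]
    exact mem_connectedComponentIn (pinf_not_UU hm)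
  obtain ⟨c1, c2, c3, c4, c5⟩ := hp
  have h1 : pinf 1 = -1 := rfl
  have h2 : pinf 2 = 0 := rfl
  have := zf_le hm i
  have hcz : czv = -11/20 := rfl
  have := gp_pos hm
  rw [h1, h2] at c2
  linarith

lemma Sset_sub (hm : 1 ≤ m) :
    Sset m ⊆ insert (connectedComponentIn (UU m)ᶜ pinf)
      {C | ∃ i j, i + 1 < m ∧ j + 1 < m ∧ C = Vc m i j} := by
  rintro C ⟨⟨x, hxU, rfl⟩, ⟨f, hfC, hfF⟩⟩
  have hg := gp_pos hm
  obtain ⟨x', hx'C, hdist⟩ := Metric.mem_closure_iff.1 hfC (gp m / 4) (by linarith)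
  obtain ⟨hf0, hf1, hf2, hf3, hf4⟩ := F_bounds hfF
  have hd0 : dist (f 0) (x' 0) ≤ dist f x' := dist_le_pi_dist f x' 0
  have hd1 : dist (f 1) (x' 1) ≤ dist f x' := dist_le_pi_dist f x' 1
  have hd2 : dist (f 2) (x' 2) ≤ dist f x' := dist_le_pi_dist f x' 2
  rw [Real.dist_eq] at hd0 hd1 hd2
  have hb0 : |f 0 - x' 0| < gp m/4 := lt_of_le_of_lt hd0 hdist
  have hb1 : |f 1 - x' 1| < gp m/4 := lt_of_le_of_lt hd1 hdist
  have hb2 : |f 2 - x' 2| < gp m/4 := lt_of_le_of_lt hd2 hdist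
  rw [abs_lt] at hb0 hb1 hb2
  have hx'U : x' ∈ (UU m)ᶜ := connectedComponentIn_subset _ _ hx'C
  have hCeq : connectedComponentIn (UU m)ᶜ x = connectedComponentIn (UU m)ᶜ x' :=
    connectedComponentIn_eq hx'C
  rcases classify hm hx'U (by linarith) (by linarith) (by linarith) (by linarith) with
    ⟨i, j, hi, hj, hmem⟩ | hO
  · right
    exact ⟨i, j, hi, hj, by rw [hCeq, cc_eq_cell isOpen_Vc isPreconnected_Vc
      (Vc_sub_compl hm hi hj) (frontier_Vc_sub hm hi hj) hmem]⟩
  · left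
    rw [hCeq, hO]

end Assemble

/-! ### the final count -/

lemma main_count {m : ℕ} (hm : 1 ≤ m) :
    (1/4 : ℝ) * (m : ℝ) ^ 2 ≤ ((Sset m).ncard : ℝ) := by
  classical
  set O := connectedComponentIn (UU m)ᶜ pinf with hO
  set prod := (Finset.range (m-1)) ×ˢ (Finset.range (m-1)) with hprod
  set img := prod.image (fun ij : ℕ × ℕ => Vc m ij.1 ij.2) with himg
  set Tfin : Finset (Set V3) := insert O img with hT
  -- T is contained in S
  have hTsub : ↑Tfin ⊆ Sset m := by
    intro C hC
    simp only [hT, Finset.coe_insert, Set.mem_insert_iff, Finset.mem_coe, himg,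
      Finset.mem_image] at hC
    rcases hC with rfl | ⟨ij, hij, rfl⟩
    · exact Ocomp_mem_Sset hm
    · simp only [hprod, Finset.mem_product, Finset.mem_range] at hij
      exact Vc_mem_Sset hm (by omega) (by omega)
  -- S is finite
  have hSfin : (Sset m).Finite := by
    apply Set.Finite.subset _ (Sset_sub hm)
    apply Set.Finite.insert
    have heq : {C : Set V3 | ∃ i j, i + 1 < m ∧ j + 1 < m ∧ C = Vc m i j} =
        (fun ij : ℕ × ℕ => Vc m ij.1 ij.2) '' (Set.Iio (m-1) ×ˢ Set.Iio (m-1)) := by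
      ext C
      simp only [Set.mem_setOf_eq, Set.mem_image, Set.mem_prod, Set.mem_Iio]
      constructor
      · rintro ⟨i, j, hi, hj, rfl⟩
        exact ⟨(i, j), ⟨by omega, by omega⟩, rfl⟩
      · rintro ⟨⟨i, j⟩, ⟨hi, hj⟩, rfl⟩
        exact ⟨i, j, by omega, by omega, rfl⟩
    rw [heq]
    exact (((Set.finite_Iio _).prod (Set.finite_Iio _)).image _)
  -- injectivity of the cells
  have hinj : Set.InjOn (fun ij : ℕ × ℕ => Vc m ij.1 ij.2) ↑prod := by
    rintro ⟨i, j⟩ hij ⟨i', j'⟩ hij' heq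
    simp only [hprod, Finset.coe_product, Set.mem_prod, Finset.mem_coe,
      Finset.mem_range] at hij hij'
    by_contra hne
    have hne' : i ≠ i' ∨ j ≠ j' := by
      by_contra h
      push_neg at h
      exact hne (by rw [h.1, h.2])
    have heq' : Vc m i j = Vc m i' j' := heq
    refine Vc_disjoint hm (by omega) (by omega) (by omega) (by omega) hne'
      (pw m i' j') ?_ (pw_mem hm (by omega) (by omega))
    rw [heq']
    exact pw_mem hm (by omega) (by omega)
  have hOni : O ∉ img := by
    intro hOmem
    simp only [himg, Finset.mem_image] at hOmem
    obtain ⟨⟨i, j⟩, hij, heq⟩ := hOmem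
    simp only [hprod, Finset.mem_product, Finset.mem_range] at hij
    exact Vc_ne_Ocomp hm (by omega) (by omega) heq
  have hcard : Tfin.card = (m-1) * (m-1) + 1 := by
    rw [hT, Finset.card_insert_of_notMem hOni, himg,
      Finset.card_image_of_injOn hinj, hprod, Finset.card_product, Finset.card_range]
  have hle : Tfin.card ≤ (Sset m).ncard := by
    rw [← Set.ncard_coe_finset]
    exact Set.ncard_le_ncard hTsub hSfin
  have hcast : ((m - 1 : ℕ) : ℝ) = (m:ℝ) - 1 := by
    rw [Nat.cast_sub hm]; norm_num
  have hm1 : (1:ℝ) ≤ (m:ℝ) := by exact_mod_cast hm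
  have : ((Tfin.card : ℕ) : ℝ) ≤ ((Sset m).ncard : ℝ) := by exact_mod_cast hle
  rw [hcard] at this
  push_cast [hcast] at this
  nlinarith [sq_nonneg (3*(m:ℝ) - 4)]

end MH

/-- **Warm-up construction.** There is a constant `c₀ > 0` such that for every
positive integer `m` there are `2m` translates of `Kwarm` which, together with
`Kwarm` itself, form a union `U` such that at least `c₀·m²` connected components
of the complement of `U` have closure intersecting the facet `F`. -/
theorem many_holes_touching_facet :
    ∃ c₀ : ℝ, 0 < c₀ ∧
      ∀ m : ℕ, 0 < m →
        ∃ t : Fin (2 * m) → (Fin 3 → ℝ),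
          c₀ * (m : ℝ) ^ 2 ≤
            ({C : Set (Fin 3 → ℝ) |
                (∃ x ∈ (Kwarm ∪ ⋃ i, t i +ᵥ Kwarm)ᶜ,
                  C = connectedComponentIn (Kwarm ∪ ⋃ i, t i +ᵥ Kwarm)ᶜ x) ∧
                (closure C ∩ Fwarm).Nonempty}).ncard := by
  refine ⟨1/4, by norm_num, ?_⟩
  intro m hm
  refine ⟨MH.tt m, ?_⟩
  have := MH.main_count (m := m) hm
  exact this
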